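/- Every coset of (ℚ_p^×)^n in ℚ_p^× is represented by a positive integer; i.e., for every x ∈ ℚ_p^× there exists a positive integer k and y ∈ ℚ_p^× with x = k·y^n. -/

import Mathlib

open Polynomial in
theorem aux_pow_eq (p n : ℕ) [Fact p.Prime] (c : ℤ_[p])
    (h : ‖c - 1‖ < ‖(n : ℤ_[p])‖ ^ 2) : ∃ z : ℤ_[p], z ^ n = c := by
  have heval : ((X ^ n - C c).eval 1 : ℤ_[p]) = 1 - c := by simp
  have hderiv : ((X ^ n - C c).derivative.eval 1 : ℤ_[p]) = n := by simp [derivative_X_pow]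
  obtain ⟨z, hz, -⟩ := hensels_lemma (F := X ^ n - C c) (a := 1)
    (by rw [coe_aeval_eq_eval, heval, hderiv, norm_sub_rev]; exact h)
  exact ⟨z, by simpa [sub_eq_zero] using hz⟩

/-- Every coset of (ℚ_p^×)^n in ℚ_p^× is represented by a positive integer:
for every x ∈ ℚ_p^× there are a positive integer k and y ∈ ℚ_p^× with x = k·y^n. -/
theorem stmt11 (p : ℕ) [Fact p.Prime] (n : ℕ) (hn : 2 ≤ n)
    (x : ℚ_[p]) (hx : x ≠ 0) :
    ∃ k : ℕ, 0 < k ∧ ∃ y : ℚ_[p], y ≠ 0 ∧ x = (k : ℚ_[p]) * y ^ n := by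
  have hp := Fact.out (p := p.Prime)
  have hp0 : (p : ℚ_[p]) ≠ 0 := by exact_mod_cast (Nat.cast_ne_zero (R := ℚ_[p])).2 hp.ne_zero
  have hpR : (0:ℝ) < p := by exact_mod_cast hp.pos
  set v : ℤ := x.valuation with hv
  set u : ℚ_[p] := x * (p : ℚ_[p]) ^ (-v) with hu
  have hunorm : ‖u‖ = 1 := by
    rw [hu, norm_mul, norm_zpow, Padic.norm_p, Padic.norm_eq_zpow_neg_valuation hx,
      inv_zpow, ← hv, mul_inv_cancel₀ (zpow_ne_zero _ hpR.ne')]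
  set U : ℤ_[p] := ⟨u, le_of_eq hunorm⟩ with hU
  have hUnorm : ‖U‖ = 1 := hunorm
  have hn0 : (n : ℤ_[p]) ≠ 0 := by exact_mod_cast (Nat.cast_ne_zero (R := ℤ_[p])).2 (by omega)
  have hnn : (0:ℝ) < ‖(n : ℤ_[p])‖ ^ 2 := by
    have := norm_pos_iff.2 hn0; positivity
  obtain ⟨m, hm⟩ := exists_pow_lt_of_lt_one hnn (by
    rw [inv_lt_one_iff₀]; right; exact_mod_cast hp.one_lt : (p:ℝ)⁻¹ < 1)
  set k : ℕ := U.appr m with hk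
  have hdist : ‖U - (k : ℤ_[p])‖ < ‖(n : ℤ_[p])‖ ^ 2 := by
    have h1 : ‖U - (k : ℤ_[p])‖ ≤ (p:ℝ) ^ (-(m:ℤ)) :=
      (PadicInt.norm_le_pow_iff_mem_span_pow _ m).2 (U.appr_spec m)
    calc ‖U - (k : ℤ_[p])‖ ≤ (p:ℝ) ^ (-(m:ℤ)) := h1
      _ = ((p:ℝ)⁻¹) ^ m := by rw [zpow_neg, ← inv_zpow, zpow_natCast]
      _ < _ := hm
  have hdist1 : ‖U - (k : ℤ_[p])‖ < 1 := lt_of_lt_of_le hdist (by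
    calc ‖(n : ℤ_[p])‖ ^ 2 ≤ 1 ^ 2 := by gcongr; exact PadicInt.norm_le_one _
      _ = 1 := one_pow 2)
  have hknorm : ‖(k : ℤ_[p])‖ = 1 := by
    have h3 := PadicInt.nonarchimedean ((k : ℤ_[p])) (U - (k : ℤ_[p]))
    rw [add_sub_cancel, hUnorm] at h3
    rcases le_max_iff.1 h3 with h | h
    · exact le_antisymm (PadicInt.norm_le_one _) h
    · linarith
  -- k positive
  have hkpos : 0 < k := by
    rcases Nat.eq_zero_or_pos k with h | h
    · exfalso; rw [h] at hknorm; simp at hknorm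
    · exact h
  -- k is a unit
  have hkunit : IsUnit (k : ℤ_[p]) := PadicInt.isUnit_iff.2 hknorm
  set c : ℤ_[p] := U * ↑hkunit.unit⁻¹ with hc
  have hkc : (k : ℤ_[p]) * c = U := by
    rw [hc, ← mul_assoc, mul_comm ((k:ℤ_[p])), mul_assoc]
    simp [IsUnit.unit_spec]
  have hcnorm : ‖c - 1‖ < ‖(n : ℤ_[p])‖ ^ 2 := by
    have hinv : ‖(↑hkunit.unit⁻¹ : ℤ_[p])‖ = 1 := PadicInt.norm_units _
    have : c - 1 = (U - (k : ℤ_[p])) * ↑hkunit.unit⁻¹ := by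
      rw [hc, sub_mul]; congr 1
      have := hkunit.unit_spec
      exact hkunit.mul_val_inv.symm
    rw [this, norm_mul, hinv, mul_one]
    exact hdist
  obtain ⟨z, hz⟩ := aux_pow_eq p n c hcnorm
  have hc0 : c ≠ 0 := by
    intro h0
    rw [h0, mul_zero] at hkc
    rw [← hkc] at hUnorm; simp at hUnorm
  have hzz : z ≠ 0 := by
    intro h0
    apply hc0
    rw [h0] at hz
    rw [← hz]; simp [zero_pow (by omega : n ≠ 0)]
  have hz0 : (z : ℚ_[p]) ≠ 0 := PadicInt.coe_ne_zero.2 hzz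
  -- decompose valuation
  set q : ℤ := v / n with hq
  set r : ℤ := v % n with hr
  have hvr : v = n * q + r := (Int.mul_ediv_add_emod v n).symm ▸ by omega
  have hr0 : 0 ≤ r := Int.emod_nonneg v (by exact_mod_cast (by omega : (n:ℤ) ≠ 0))
  refine ⟨p ^ r.toNat * k, Nat.mul_pos (pow_pos hp.pos _) hkpos, (z : ℚ_[p]) * (p : ℚ_[p]) ^ q, ?_, ?_⟩
  · exact mul_ne_zero hz0 (zpow_ne_zero _ hp0)
  · have hxu : x = u * (p : ℚ_[p]) ^ v := by
      rw [hu, mul_assoc, ← zpow_add₀ hp0]; simp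
    have hUc : (U : ℚ_[p]) = (k : ℚ_[p]) * (c : ℚ_[p]) := by rw [← hkc]; push_cast; ring
    have hzn : ((z : ℚ_[p])) ^ n = (c : ℚ_[p]) := by exact_mod_cast congrArg _ hz
    rw [hxu, show u = (U : ℚ_[p]) from rfl, hUc]
    push_cast
    rw [mul_pow, ← zpow_natCast ((p:ℚ_[p]) ^ q), ← zpow_mul, hzn]
    rw [hvr, zpow_add₀ hp0, ← zpow_natCast (p:ℚ_[p]) r.toNat]
    rw [Int.toNat_of_nonneg hr0]
    ring
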